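/- Define N_n = Σ_{k=3}^{n-1} a_{k,n} for n ≥ 5 (with N_3 = N_4 = 1), where for each k ≥ 3: a_{k,k} = a_{k,k+1} = 1, a_{k,k+i} = 2^{i-2} for 2 ≤ i ≤ k-1, a_{k,2k} = 2^{k-2} - 1, and a_{k,m} = Σ_{i=1}^{k-1} a_{k,m-i} for m > 2k. Then liminf_{n→∞} (log N_n)/n ≥ log 2. -/

import Mathlib

open Filter Finset Real

/-- Reindexing lemma: geometric-type sum over `Icc 1 (k-1)` with exponents `m - i`. -/
lemma sum_Icc_pow_eq (β : ℝ) (k m : ℕ) (hk : 1 ≤ k) (hm : 2 * k < m) :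
    ∑ i ∈ Finset.Icc 1 (k - 1), β ^ (m - i)
      = β ^ (m - (k - 1)) * ∑ j ∈ Finset.range (k - 1), β ^ j := by
  rw [Finset.mul_sum]
  refine Finset.sum_bij' (fun i _ => k - 1 - i) (fun j _ => k - 1 - j) ?_ ?_ ?_ ?_ ?_
  · intro i hi
    simp only [Finset.mem_Icc] at hi
    simp only [Finset.mem_range]
    omega
  · intro j hj
    simp only [Finset.mem_range] at hj
    simp only [Finset.mem_Icc]
    omega
  · intro i hi
    simp only [Finset.mem_Icc] at hi
    omega
  · intro j hj
    simp only [Finset.mem_range] at hj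
    omega
  · intro i hi
    simp only [Finset.mem_Icc] at hi
    rw [← pow_add]
    congr 1
    omega

/-- Every defined value of `a k m` (for `m ≥ k`) is at least 1. -/
lemma one_le_a
    (a : ℕ → ℕ → ℝ)
    (ha : ∀ k : ℕ, 3 ≤ k →
      a k k = 1 ∧ a k (k + 1) = 1 ∧
      (∀ i : ℕ, 2 ≤ i → i ≤ k - 1 → a k (k + i) = 2 ^ (i - 2)) ∧
      a k (2 * k) = 2 ^ (k - 2) - 1 ∧
      (∀ m : ℕ, 2 * k < m → a k m = ∑ i ∈ Finset.Icc 1 (k - 1), a k (m - i)))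
    (k : ℕ) (hk : 3 ≤ k) : ∀ m, k ≤ m → 1 ≤ a k m := by
  intro m
  induction m using Nat.strong_induction_on with
  | _ m ih =>
    intro hm
    obtain ⟨h1, h2, h3, h4, h5⟩ := ha k hk
    rcases eq_or_lt_of_le hm with hmk | hmk
    · rw [← hmk, h1]
    rcases Nat.lt_or_ge m (2 * k) with hlt | hge
    · -- k < m < 2k
      by_cases hm1 : m = k + 1
      · rw [hm1, h2]
      · have hi2 : 2 ≤ m - k := by omega
        have hik : m - k ≤ k - 1 := by omega
        have : a k m = 2 ^ (m - k - 2) := by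
          have := h3 (m - k) hi2 hik
          rwa [Nat.add_sub_cancel' hm] at this
        rw [this]
        exact one_le_pow₀ (by norm_num)
    rcases eq_or_lt_of_le hge with h2k | h2k
    · rw [← h2k, h4]
      have : (2:ℝ) ≤ 2 ^ (k - 2) := by
        calc (2:ℝ) = 2 ^ 1 := (pow_one 2).symm
        _ ≤ 2 ^ (k - 2) := pow_le_pow_right₀ (by norm_num) (by omega)
      linarith
    · rw [h5 m h2k]
      have hcard : ∀ i ∈ Finset.Icc 1 (k - 1), (1:ℝ) ≤ a k (m - i) := by
        intro i hi
        simp only [Finset.mem_Icc] at hi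
        exact ih (m - i) (by omega) (by omega)
      calc (1:ℝ) ≤ ∑ _i ∈ Finset.Icc 1 (k - 1), (1:ℝ) := by
            rw [Finset.sum_const, Nat.card_Icc]
            have : 2 ≤ k - 1 + 1 - 1 := by omega
            have : (2:ℝ) ≤ ((k - 1 + 1 - 1 : ℕ) : ℝ) := by exact_mod_cast this
            simp only [nsmul_eq_mul, mul_one]
            linarith
      _ ≤ ∑ i ∈ Finset.Icc 1 (k - 1), a k (m - i) := Finset.sum_le_sum hcard

/-- Every defined value of `a k m` (for `m ≥ k`) is at most `2 ^ m`. -/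
lemma a_le_two_pow
    (a : ℕ → ℕ → ℝ)
    (ha : ∀ k : ℕ, 3 ≤ k →
      a k k = 1 ∧ a k (k + 1) = 1 ∧
      (∀ i : ℕ, 2 ≤ i → i ≤ k - 1 → a k (k + i) = 2 ^ (i - 2)) ∧
      a k (2 * k) = 2 ^ (k - 2) - 1 ∧
      (∀ m : ℕ, 2 * k < m → a k m = ∑ i ∈ Finset.Icc 1 (k - 1), a k (m - i)))
    (k : ℕ) (hk : 3 ≤ k) : ∀ m, k ≤ m → a k m ≤ 2 ^ m := by
  intro m
  induction m using Nat.strong_induction_on with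
  | _ m ih =>
    intro hm
    obtain ⟨h1, h2, h3, h4, h5⟩ := ha k hk
    have hpow : ∀ s t : ℕ, s ≤ t → (2:ℝ) ^ s ≤ 2 ^ t := fun s t h =>
      pow_le_pow_right₀ (by norm_num) h
    rcases eq_or_lt_of_le hm with hmk | hmk
    · rw [← hmk, h1]
      exact le_trans (by norm_num) (hpow 0 k (by omega))
    rcases Nat.lt_or_ge m (2 * k) with hlt | hge
    · by_cases hm1 : m = k + 1
      · rw [hm1, h2]
        exact le_trans (by norm_num) (hpow 0 (k+1) (by omega))
      · have hi2 : 2 ≤ m - k := by omega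
        have hik : m - k ≤ k - 1 := by omega
        have : a k m = 2 ^ (m - k - 2) := by
          have := h3 (m - k) hi2 hik
          rwa [Nat.add_sub_cancel' hm] at this
        rw [this]
        exact hpow _ _ (by omega)
    rcases eq_or_lt_of_le hge with h2k | h2k
    · rw [← h2k, h4]
      have := hpow (k - 2) (2 * k) (by omega)
      linarith
    · rw [h5 m h2k]
      have hterm : ∀ i ∈ Finset.Icc 1 (k - 1), a k (m - i) ≤ 2 ^ (m - i) := by
        intro i hi
        simp only [Finset.mem_Icc] at hi
        exact ih (m - i) (by omega) (by omega)
      calc ∑ i ∈ Finset.Icc 1 (k - 1), a k (m - i)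
          ≤ ∑ i ∈ Finset.Icc 1 (k - 1), (2:ℝ) ^ (m - i) := Finset.sum_le_sum hterm
        _ = 2 ^ (m - (k - 1)) * ∑ j ∈ Finset.range (k - 1), (2:ℝ) ^ j :=
            sum_Icc_pow_eq 2 k m (by omega) h2k
        _ = 2 ^ (m - (k - 1)) * (2 ^ (k - 1) - 1) := by
            rw [geom_sum_eq (by norm_num : (2:ℝ) ≠ 1)]
            norm_num
        _ ≤ 2 ^ (m - (k - 1)) * 2 ^ (k - 1) := by
            have : (0:ℝ) ≤ 2 ^ (m - (k - 1)) := by positivity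
            nlinarith [this]
        _ = 2 ^ m := by rw [← pow_add]; congr 1; omega

/-- Growth lemma: if `β ≥ 1` satisfies the geometric inequality for `k`, then
`a k m ≥ β ^ m / β ^ (2k)`. -/
lemma a_growth
    (a : ℕ → ℕ → ℝ)
    (ha : ∀ k : ℕ, 3 ≤ k →
      a k k = 1 ∧ a k (k + 1) = 1 ∧
      (∀ i : ℕ, 2 ≤ i → i ≤ k - 1 → a k (k + i) = 2 ^ (i - 2)) ∧
      a k (2 * k) = 2 ^ (k - 2) - 1 ∧
      (∀ m : ℕ, 2 * k < m → a k m = ∑ i ∈ Finset.Icc 1 (k - 1), a k (m - i)))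
    (k : ℕ) (hk : 3 ≤ k) (β : ℝ) (hβ1 : 1 ≤ β)
    (hgeom : β ^ (k - 1) ≤ ∑ j ∈ Finset.range (k - 1), β ^ j) :
    ∀ m, k ≤ m → β ^ m ≤ β ^ (2 * k) * a k m := by
  intro m
  induction m using Nat.strong_induction_on with
  | _ m ih =>
    intro hm
    obtain ⟨h1, h2, h3, h4, h5⟩ := ha k hk
    rcases Nat.lt_or_ge (2 * k) m with h2k | h2k
    · -- recursive case
      rw [h5 m h2k]
      have key : β ^ m ≤ ∑ i ∈ Finset.Icc 1 (k - 1), β ^ (m - i) := by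
        rw [sum_Icc_pow_eq β k m (by omega) h2k]
        calc β ^ m = β ^ (m - (k - 1)) * β ^ (k - 1) := by
              rw [← pow_add]; congr 1; omega
          _ ≤ β ^ (m - (k - 1)) * ∑ j ∈ Finset.range (k - 1), β ^ j :=
              mul_le_mul_of_nonneg_left hgeom (by positivity)
      calc β ^ m ≤ ∑ i ∈ Finset.Icc 1 (k - 1), β ^ (m - i) := key
        _ ≤ ∑ i ∈ Finset.Icc 1 (k - 1), β ^ (2 * k) * a k (m - i) := by
            refine Finset.sum_le_sum fun i hi => ?_
            simp only [Finset.mem_Icc] at hi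
            exact ih (m - i) (by omega) (by omega)
        _ = β ^ (2 * k) * ∑ i ∈ Finset.Icc 1 (k - 1), a k (m - i) := by
            rw [Finset.mul_sum]
    · -- base case : k ≤ m ≤ 2k
      have h1a : 1 ≤ a k m := one_le_a a ha k hk m hm
      calc β ^ m ≤ β ^ (2 * k) := pow_le_pow_right₀ hβ1 h2k
        _ = β ^ (2 * k) * 1 := (mul_one _).symm
        _ ≤ β ^ (2 * k) * a k m := by
            have : (0:ℝ) ≤ β ^ (2 * k) := by positivity
            nlinarith

theorem liminf_log_N
    (a : ℕ → ℕ → ℝ)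
    (ha : ∀ k : ℕ, 3 ≤ k →
      a k k = 1 ∧ a k (k + 1) = 1 ∧
      (∀ i : ℕ, 2 ≤ i → i ≤ k - 1 → a k (k + i) = 2 ^ (i - 2)) ∧
      a k (2 * k) = 2 ^ (k - 2) - 1 ∧
      (∀ m : ℕ, 2 * k < m → a k m = ∑ i ∈ Finset.Icc 1 (k - 1), a k (m - i)))
    (N : ℕ → ℝ)
    (hN3 : N 3 = 1) (hN4 : N 4 = 1)
    (hN : ∀ n : ℕ, 5 ≤ n → N n = ∑ k ∈ Finset.Icc 3 (n - 1), a k n) :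
    Real.log 2 ≤ Filter.liminf (fun n : ℕ => Real.log (N n) / n) Filter.atTop := by
  -- Basic facts about N
  have hNone : ∀ n : ℕ, 5 ≤ n → 1 ≤ N n := by
    intro n hn
    rw [hN n hn]
    calc (1:ℝ) ≤ a 3 n := one_le_a a ha 3 le_rfl n (by omega)
      _ ≤ ∑ k ∈ Finset.Icc 3 (n - 1), a k n := by
          refine Finset.single_le_sum (f := fun k => a k n) (fun k hk => ?_) ?_
          · simp only [Finset.mem_Icc] at hk
            exact le_trans zero_le_one (one_le_a a ha k hk.1 n (by omega))
          · simp only [Finset.mem_Icc]; omega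
  have hNub : ∀ n : ℕ, 5 ≤ n → N n ≤ 4 ^ n := by
    intro n hn
    rw [hN n hn]
    calc ∑ k ∈ Finset.Icc 3 (n - 1), a k n
        ≤ ∑ _k ∈ Finset.Icc 3 (n - 1), (2:ℝ) ^ n := by
          refine Finset.sum_le_sum fun k hk => ?_
          simp only [Finset.mem_Icc] at hk
          exact a_le_two_pow a ha k hk.1 n (by omega)
      _ = ((n - 1 + 1 - 3 : ℕ) : ℝ) * 2 ^ n := by
          rw [Finset.sum_const, Nat.card_Icc, nsmul_eq_mul]
      _ ≤ (2:ℝ) ^ n * 2 ^ n := by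
          refine mul_le_mul_of_nonneg_right ?_ (by positivity)
          calc ((n - 1 + 1 - 3 : ℕ) : ℝ) ≤ (n : ℝ) := by
                exact_mod_cast (by omega : n - 1 + 1 - 3 ≤ n)
            _ ≤ (2:ℝ) ^ n := by
                exact_mod_cast (Nat.lt_two_pow_self (n := n)).le
      _ = 4 ^ n := by rw [← mul_pow]; norm_num
  -- the sequence is eventually bounded above, hence cobounded
  have hcob : Filter.IsCoboundedUnder (· ≥ ·) Filter.atTop
      (fun n : ℕ => Real.log (N n) / n) := by
    refine Filter.isCoboundedUnder_ge_of_eventually_le Filter.atTop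
      (x := Real.log 4) ?_
    filter_upwards [Filter.eventually_ge_atTop 5] with n hn
    have h1 : (1:ℝ) ≤ N n := hNone n hn
    have h2 : N n ≤ 4 ^ n := hNub n hn
    have hlog : Real.log (N n) ≤ n * Real.log 4 := by
      calc Real.log (N n) ≤ Real.log (4 ^ n) :=
            Real.log_le_log (by linarith) h2
        _ = n * Real.log 4 := by rw [Real.log_pow]
    have hn0 : (0:ℝ) < n := by exact_mod_cast (by omega : 0 < n)
    rw [div_le_iff₀ hn0]
    calc Real.log (N n) ≤ n * Real.log 4 := hlog
      _ = Real.log 4 * n := mul_comm _ _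
  -- main argument
  refine le_of_forall_lt fun b hb => ?_
  -- choose β with max 1 (exp b) < β < 2
  set γ : ℝ := max 1 (Real.exp b) with hγdef
  have hγ2 : γ < 2 := by
    have h1 : Real.exp b < 2 := by
      have := Real.exp_lt_exp.mpr hb
      rwa [Real.exp_log (by norm_num)] at this
    simp only [hγdef, max_lt_iff]
    exact ⟨by norm_num, h1⟩
  set β : ℝ := (γ + 2) / 2 with hβdef
  have hβ1 : 1 < β := by
    have : 1 ≤ γ := le_max_left _ _
    simp only [hβdef]; linarith
  have hβ2 : β < 2 := by simp only [hβdef]; linarith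
  have hbβ : b < Real.log β := by
    have hexpb : Real.exp b < β := by
      have : Real.exp b ≤ γ := le_max_right _ _
      simp only [hβdef]
      have : 1 ≤ γ := le_max_left _ _
      have : Real.exp b ≤ γ := le_max_right _ _
      linarith
    calc b = Real.log (Real.exp b) := (Real.log_exp b).symm
      _ < Real.log β := Real.log_lt_log (Real.exp_pos b) hexpb
  clear_value γ
  clear_value β
  -- choose k with (2 - β) * β ^ (k - 1) ≥ 1
  obtain ⟨n₀, hn₀⟩ := (tendsto_pow_atTop_atTop_of_one_lt hβ1).eventually_ge_atTop
    (1 / (2 - β)) |>.exists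
  set k : ℕ := n₀ + 3 with hkdef
  have hk3 : 3 ≤ k := by omega
  have hkpow : 1 / (2 - β) ≤ β ^ (k - 1) := by
    calc 1 / (2 - β) ≤ β ^ n₀ := hn₀
      _ ≤ β ^ (k - 1) := pow_le_pow_right₀ hβ1.le (by omega)
  have hgeom : β ^ (k - 1) ≤ ∑ j ∈ Finset.range (k - 1), β ^ j := by
    rw [geom_sum_eq (ne_of_gt hβ1)]
    rw [le_div_iff₀ (by linarith)]
    have h2β : 0 < 2 - β := by linarith
    rw [div_le_iff₀ h2β] at hkpow
    nlinarith [hkpow]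
  -- eventual lower bound
  set b' : ℝ := (b + Real.log β) / 2 with hb'def
  have hbb' : b < b' := by simp only [hb'def]; linarith
  have hb'β : b' < Real.log β := by simp only [hb'def]; linarith
  have hβ0 : (0:ℝ) < β := by linarith
  clear_value b'
  have htend : Filter.Tendsto (fun n : ℕ => (2 * k * Real.log β) / n)
      Filter.atTop (nhds 0) := tendsto_const_div_atTop_nhds_zero_nat _
  have hev : ∀ᶠ n : ℕ in Filter.atTop, (2 * k * Real.log β) / n < Real.log β - b' := by
    have hpos : 0 < Real.log β - b' := by linarith
    exact htend.eventually (gt_mem_nhds hpos) |>.mono fun n hn => hn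
  have hmain : ∀ᶠ n : ℕ in Filter.atTop,
      b' ≤ Real.log (N n) / n := by
    filter_upwards [Filter.eventually_ge_atTop (max 5 (2 * k + 1)), hev] with n hn hevn
    have hn5 : 5 ≤ n := le_trans (le_max_left _ _) hn
    have hnk : 2 * k + 1 ≤ n := le_trans (le_max_right _ _) hn
    -- N n ≥ a k n ≥ β^n / β^(2k)
    have hak : β ^ n ≤ β ^ (2 * k) * a k n :=
      a_growth a ha k hk3 β hβ1.le hgeom n (by omega)
    have haN : a k n ≤ N n := by
      rw [hN n hn5]
      refine Finset.single_le_sum (f := fun k' => a k' n) (fun k' hk' => ?_) ?_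
      · simp only [Finset.mem_Icc] at hk'
        exact le_trans zero_le_one (one_le_a a ha k' hk'.1 n (by omega))
      · simp only [Finset.mem_Icc]; omega
    have hNlb : β ^ n / β ^ (2 * k) ≤ N n := by
      rw [div_le_iff₀ (by positivity)]
      calc β ^ n ≤ β ^ (2 * k) * a k n := hak
        _ ≤ β ^ (2 * k) * N n := by
            have : (0:ℝ) ≤ β ^ (2 * k) := by positivity
            nlinarith
        _ = N n * β ^ (2 * k) := mul_comm _ _
    have hNpos : (0:ℝ) < β ^ n / β ^ (2 * k) := by positivity
    have hlog : (n : ℝ) * Real.log β - (2 * k) * Real.log β ≤ Real.log (N n) := by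
      calc (n : ℝ) * Real.log β - (2 * k) * Real.log β
          = Real.log (β ^ n / β ^ (2 * k)) := by
            rw [Real.log_div (by positivity) (by positivity),
              Real.log_pow, Real.log_pow]
            push_cast
            ring
        _ ≤ Real.log (N n) := Real.log_le_log hNpos hNlb
    have hn0 : (0:ℝ) < n := by exact_mod_cast (by omega : 0 < n)
    rw [le_div_iff₀ hn0]
    have : (2 * k * Real.log β) / n < Real.log β - b' := hevn
    rw [div_lt_iff₀ hn0] at this
    calc b' * n = (Real.log β) * n - (Real.log β - b') * n := by ring
      _ ≤ (Real.log β) * n - 2 * k * Real.log β := by nlinarith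
      _ = (n : ℝ) * Real.log β - (2 * k) * Real.log β := by push_cast; ring
      _ ≤ Real.log (N n) := hlog
  have : b' ≤ Filter.liminf (fun n : ℕ => Real.log (N n) / n) Filter.atTop :=
    Filter.le_liminf_of_le hcob hmain
  linarith
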